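/- Let n ≥ 5 and let C_n^c be a basic extension of the Černý automaton C_n by a map c with |image of c| ≤ n-2. Then C_n^c admits a synchronizing word of length strictly less than (n-1)^2. -/

import Mathlib

/-- Apply a word (list of transition functions) to a state, left to right. -/
def applyWord {α : Type*} (w : List (α → α)) (q : α) : α :=
  w.foldl (fun s f => f s) q

/-- The Černý symbols on `Fin n` (state `i+1` is index `i`). -/
def cernyA (n : ℕ) [NeZero n] : Fin n → Fin n := fun q => q + 1
def cernyB (n : ℕ) [NeZero n] : Fin n → Fin n := fun q => if q = 0 then 1 else q

/-- A word over the alphabet `{a, b, c}` of `C_n^c` which synchronizes. -/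
def ShortSync (n : ℕ) [NeZero n] (c : Fin n → Fin n) (m : ℕ) : Prop :=
  ∃ w : List (Fin n → Fin n),
    (∀ f ∈ w, f = cernyA n ∨ f = cernyB n ∨ f = c) ∧
    (∃ qs : Fin n, ∀ q : Fin n, applyWord w q = qs) ∧
    w.length < m

open Fin.NatCast

lemma applyWord_append {α : Type*} (u v : List (α → α)) (q : α) :
    applyWord (u ++ v) q = applyWord v (applyWord u q) := by
  simp [applyWord, List.foldl_append]

lemma applyWord_cons {α : Type*} (f : α → α) (w : List (α → α)) (q : α) :
    applyWord (f :: w) q = applyWord w (f q) := rfl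

lemma applyWord_singleton {α : Type*} (f : α → α) (q : α) :
    applyWord [f] q = f q := rfl

lemma applyWord_replicate_a (n : ℕ) [NeZero n] (t : ℕ) (q : Fin n) :
    applyWord (List.replicate t (cernyA n)) q = q + (t : Fin n) := by
  induction t generalizing q with
  | zero => simp [applyWord]
  | succ t ih =>
      rw [List.replicate_succ, applyWord_cons, ih]
      show q + 1 + (t : Fin n) = q + ((t + 1 : ℕ) : Fin n)
      push_cast
      abel

lemma fin_val_natCast_lt (n : ℕ) [NeZero n] (t : ℕ) (ht : t < n) :
    ((t : Fin n)).val = t := by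
  rw [Fin.val_natCast]; exact Nat.mod_eq_of_lt ht

lemma val_add_pred (n : ℕ) [NeZero n] (q : Fin n) (h : 1 ≤ q.val) :
    (q + ((n - 1 : ℕ) : Fin n)).val = q.val - 1 := by
  have hn : 0 < n := Nat.pos_of_ne_zero (NeZero.ne n)
  have hq := q.isLt
  rw [Fin.val_add, fin_val_natCast_lt n (n-1) (by omega)]
  have h2 : q.val + (n - 1) = (q.val - 1) + 1 * n := by omega
  rw [h2, Nat.add_mul_mod_self_right, Nat.mod_eq_of_lt (by omega)]

lemma fin_one_val (n : ℕ) [NeZero n] (hn : 2 ≤ n) : ((1 : Fin n)).val = 1 := by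
  rw [← Nat.cast_one, fin_val_natCast_lt n 1 (by omega)]

lemma cernyB_val (n : ℕ) [NeZero n] (hn : 2 ≤ n) (q : Fin n) :
    (cernyB n q).val = max 1 q.val := by
  unfold cernyB
  split
  · next h =>
      subst h
      rw [fin_one_val n hn]
      simp
  · next h =>
      have : q.val ≠ 0 := by
        intro h0
        exact h (Fin.ext (by simpa using h0))
      omega

/-- One block `a^(n-1) b`. -/
def block (n : ℕ) [NeZero n] : List (Fin n → Fin n) :=
  List.replicate (n - 1) (cernyA n) ++ [cernyB n]

lemma block_length (n : ℕ) [NeZero n] : (block n).length = n := by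
  have hn : 0 < n := Nat.pos_of_ne_zero (NeZero.ne n)
  simp [block]; omega

lemma block_mem (n : ℕ) [NeZero n] (f : Fin n → Fin n) (hf : f ∈ block n) :
    f = cernyA n ∨ f = cernyB n := by
  simp only [block, List.mem_append, List.mem_replicate, List.mem_singleton] at hf
  rcases hf with ⟨_, h⟩ | h
  · exact Or.inl h
  · exact Or.inr h

lemma block_step (n : ℕ) [NeZero n] (hn : 5 ≤ n) (q : Fin n) (h1 : 1 ≤ q.val) :
    (applyWord (block n) q).val = max 1 (q.val - 1) := by
  unfold block
  rw [applyWord_append, applyWord_replicate_a, applyWord_singleton,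
    cernyB_val n (by omega), val_add_pred n q h1]

/-- `k` repetitions of the block. -/
def blocks (n : ℕ) [NeZero n] : ℕ → List (Fin n → Fin n)
  | 0 => []
  | k + 1 => block n ++ blocks n k

lemma blocks_length (n : ℕ) [NeZero n] (k : ℕ) : (blocks n k).length = k * n := by
  induction k with
  | zero => simp [blocks]
  | succ k ih => simp [blocks, ih, block_length]; ring

lemma blocks_mem (n : ℕ) [NeZero n] (k : ℕ) (f : Fin n → Fin n) (hf : f ∈ blocks n k) :
    f = cernyA n ∨ f = cernyB n := by
  induction k with
  | zero => simp [blocks] at hf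
  | succ k ih =>
      simp only [blocks, List.mem_append] at hf
      rcases hf with h | h
      · exact block_mem n f h
      · exact ih h

lemma blocks_spec (n : ℕ) [NeZero n] (hn : 5 ≤ n) (k : ℕ) :
    ∀ q : Fin n, 1 ≤ q.val → q.val ≤ n - 2 →
      (applyWord (blocks n k) q).val = max 1 (q.val - k) := by
  induction k with
  | zero =>
      intro q h1 h2
      simp only [blocks, applyWord]
      simp
      omega
  | succ k ih =>
      intro q h1 h2
      have hb := block_step n hn q h1
      rw [show blocks n (k+1) = block n ++ blocks n k from rfl, applyWord_append]
      have h1' : 1 ≤ (applyWord (block n) q).val := by omega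
      have h2' : (applyWord (block n) q).val ≤ n - 2 := by omega
      rw [ih _ h1' h2', hb]
      omega

theorem deficiency_two_short_sync (n : ℕ) (hn : 5 ≤ n) [NeZero n]
    (c : Fin n → Fin n) (hdef : (Finset.univ.image c).card ≤ n - 2) :
    ShortSync n c ((n - 1) ^ 2) := by
  -- find a missed state p ≠ 0
  have hcard : 1 < (Finset.univ \ Finset.univ.image c).card := by
    have h1 : (Finset.univ \ Finset.univ.image c).card
        = n - (Finset.univ.image c).card := by
      rw [Finset.card_sdiff_of_subset (Finset.subset_univ _)]
      simp
    have h2 : (Finset.univ.image c).card ≤ n - 2 := hdef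
    omega
  obtain ⟨p, hp, hp0⟩ := Finset.exists_mem_ne hcard (0 : Fin n)
  have hpim : p ∉ Finset.univ.image c := by
    simp only [Finset.mem_sdiff] at hp
    exact hp.2
  have hpv : 1 ≤ p.val := by
    have : p.val ≠ 0 := by
      intro h0
      exact hp0 (Fin.ext (by simpa using h0))
    omega
  have hplt := p.isLt
  set t : ℕ := n - 1 - p.val with ht
  refine ⟨c :: (List.replicate t (cernyA n) ++ ([cernyB n] ++ blocks n (n - 3))),
    ?_, ?_, ?_⟩
  · intro f hf
    simp only [List.mem_cons, List.mem_append, List.mem_replicate,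
      List.not_mem_nil, or_false] at hf
    rcases hf with h | ⟨_, h⟩ | h | h
    · exact Or.inr (Or.inr h)
    · exact Or.inl h
    · exact Or.inr (Or.inl h)
    · rcases blocks_mem n _ f h with h | h
      · exact Or.inl h
      · exact Or.inr (Or.inl h)
  · refine ⟨⟨1, by omega⟩, fun q => ?_⟩
    rw [applyWord_cons, applyWord_append, applyWord_replicate_a, applyWord_append,
      applyWord_singleton]
    set x : Fin n := c q + (t : Fin n) with hx
    have hxval : x.val ≤ n - 2 := by
      by_contra hcon
      push_neg at hcon
      have hxlt := x.isLt
      have hx1 : x.val = n - 1 := by omega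
      have hpt : (p + (t : Fin n)).val = n - 1 := by
        rw [Fin.val_add, fin_val_natCast_lt n t (by omega)]
        have : p.val + t = n - 1 := by omega
        rw [this, Nat.mod_eq_of_lt (by omega)]
      have hxp : x = p + (t : Fin n) := Fin.ext (by rw [hx1, hpt])
      have hcq : c q = p := by
        have := add_right_cancel (hx ▸ hxp : c q + (t : Fin n) = p + (t : Fin n))
        exact this
      exact hpim (hcq ▸ Finset.mem_image_of_mem c (Finset.mem_univ q))
    set y : Fin n := cernyB n x with hy
    have hyval : (y).val = max 1 x.val := cernyB_val n (by omega) x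
    have hy1 : 1 ≤ y.val := by omega
    have hy2 : y.val ≤ n - 2 := by omega
    have := blocks_spec n hn (n - 3) y hy1 hy2
    apply Fin.ext
    rw [this]
    simp only []
    omega
  · -- length
    simp only [List.length_cons, List.length_append, List.length_replicate,
      List.length_nil, blocks_length]
    have htle : t ≤ n - 2 := by omega
    obtain ⟨m, rfl⟩ : ∃ m, n = m + 5 := ⟨n - 5, by omega⟩
    have e1 : (m + 5 - 3) * (m + 5) = m * m + 7 * m + 10 := by
      have : m + 5 - 3 = m + 2 := by omega
      rw [this]; ring
    have e2 : (m + 5 - 1) ^ 2 = m * m + 8 * m + 16 := by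
      have : m + 5 - 1 = m + 4 := by omega
      rw [this]; ring
    rw [e1, e2] at *
    omega
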